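/- For every a ∈ ℝ and every t ≥ 0, the unit normals ν(a) and ν((1+t)a) satisfy |ν((1+t)a) − ν(a)| ≤ √2 · (t² + 2t), where ν(s) := (−s, 1)/√(1 + s²) ∈ ℝ² and |·| is the Euclidean norm on ℝ². -/

import Mathlib

/-- The upward unit normal to the graph of a function with slope `s`. -/
noncomputable def unitNormal (s : ℝ) : Fin 2 → ℝ :=
  ![-s / Real.sqrt (1 + s ^ 2), 1 / Real.sqrt (1 + s ^ 2)]

/-- For every `a ∈ ℝ` and `t ≥ 0`, the unit normals satisfy
`|ν((1+t)a) − ν(a)| ≤ √2 · (t² + 2t)`. -/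
theorem stmt8 (a t : ℝ) (ht : 0 ≤ t) :
    Real.sqrt ((unitNormal ((1 + t) * a) 0 - unitNormal a 0) ^ 2
        + (unitNormal ((1 + t) * a) 1 - unitNormal a 1) ^ 2)
      ≤ Real.sqrt 2 * (t ^ 2 + 2 * t) := by
  have hD : (0:ℝ) ≤ t ^ 2 + 2 * t := by nlinarith
  set b := (1 + t) * a with hb
  clear_value b
  have hA0 : (0:ℝ) < 1 + a ^ 2 := by positivity
  have hB0 : (0:ℝ) < 1 + b ^ 2 := by positivity
  set A := Real.sqrt (1 + a ^ 2) with hA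
  set B := Real.sqrt (1 + b ^ 2) with hB
  have hA2 : A ^ 2 = 1 + a ^ 2 := Real.sq_sqrt hA0.le
  have hB2 : B ^ 2 = 1 + b ^ 2 := Real.sq_sqrt hB0.le
  have hAnn : 0 ≤ A := Real.sqrt_nonneg _
  have hBnn : 0 ≤ B := Real.sqrt_nonneg _
  clear_value A B
  have hA1 : 1 ≤ A := by nlinarith [sq_nonneg a]
  have hB1 : 1 ≤ B := by nlinarith [sq_nonneg b]
  have hApos : 0 < A := by linarith
  have hBpos : 0 < B := by linarith
  set D := t ^ 2 + 2 * t with hDdef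
  clear_value D
  have hab : a ^ 2 ≤ b ^ 2 := by
    rw [hb]; nlinarith [mul_nonneg hD (sq_nonneg a)]
  have ha2A : a ^ 2 ≤ A ^ 2 := by nlinarith
  have hB21 : (1:ℝ) ≤ B ^ 2 := by nlinarith
  -- component 1 bound
  have h1 : (A - B) ^ 2 ≤ D ^ 2 * A ^ 2 * B ^ 2 := by
    have hid : A ^ 2 - B ^ 2 = -(a ^ 2 * D) := by rw [hA2, hB2, hb, hDdef]; ring
    have hidsq : (A - B) ^ 2 * (A + B) ^ 2 = (a ^ 2 * D) ^ 2 := by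
      linear_combination (A ^ 2 - B ^ 2 - a ^ 2 * D) * hid
    have hkey : a ^ 4 ≤ A ^ 2 * B ^ 2 * (A + B) ^ 2 := by
      have h4 : (4:ℝ) ≤ (A + B) ^ 2 := by nlinarith
      nlinarith [mul_nonneg (sq_nonneg A) (sq_nonneg B), ha2A, hB21, sq_nonneg a]
    have hsum : (0:ℝ) < (A + B) ^ 2 := by positivity
    have hmul : (A - B) ^ 2 * (A + B) ^ 2 ≤ (D ^ 2 * A ^ 2 * B ^ 2) * (A + B) ^ 2 := by
      rw [hidsq]
      calc (a ^ 2 * D) ^ 2 = a ^ 4 * D ^ 2 := by ring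
        _ ≤ (A ^ 2 * B ^ 2 * (A + B) ^ 2) * D ^ 2 :=
            mul_le_mul_of_nonneg_right hkey (sq_nonneg D)
        _ = (D ^ 2 * A ^ 2 * B ^ 2) * (A + B) ^ 2 := by ring
    exact le_of_mul_le_mul_right hmul hsum
  -- component 0 bound
  have h0 : (a * B - b * A) ^ 2 ≤ D ^ 2 * A ^ 2 * B ^ 2 := by
    have hid : b ^ 2 * A ^ 2 - a ^ 2 * B ^ 2 = a ^ 2 * D := by
      rw [hA2, hB2, hb, hDdef]; ring
    have hidsq : (b * A - a * B) ^ 2 * (b * A + a * B) ^ 2 = (a ^ 2 * D) ^ 2 := by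
      linear_combination (b ^ 2 * A ^ 2 - a ^ 2 * B ^ 2 + a ^ 2 * D) * hid
    rcases eq_or_ne a 0 with ha | ha
    · have hb0 : b = 0 := by rw [hb, ha]; ring
      rw [ha, hb0]
      have : ((0:ℝ) * B - 0 * A) ^ 2 = 0 := by ring
      rw [this]
      positivity
    · have ha2pos : 0 < a ^ 2 := lt_of_le_of_ne (sq_nonneg a) (Ne.symm (pow_ne_zero 2 ha))
      have htA : 0 ≤ t * A := mul_nonneg ht hAnn
      have h2S : 2 ≤ (1 + t) * A + B := by linarith [htA]
      have hSpos : 0 < (1 + t) * A + B := by linarith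
      have hSne : (b * A + a * B) ^ 2 = a ^ 2 * ((1 + t) * A + B) ^ 2 := by rw [hb]; ring
      have hS2pos : 0 < (b * A + a * B) ^ 2 := by
        rw [hSne]; exact mul_pos ha2pos (by positivity)
      have hS4 : (4:ℝ) ≤ ((1 + t) * A + B) ^ 2 := by
        calc (4:ℝ) = 2 ^ 2 := by norm_num
          _ ≤ ((1 + t) * A + B) ^ 2 := pow_le_pow_left₀ (by norm_num) h2S 2
      have hstep : a ^ 2 ≤ A ^ 2 * B ^ 2 * ((1 + t) * A + B) ^ 2 := by
        calc a ^ 2 ≤ A ^ 2 := ha2A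
          _ ≤ A ^ 2 * B ^ 2 := le_mul_of_one_le_right (sq_nonneg A) hB21
          _ ≤ A ^ 2 * B ^ 2 * ((1 + t) * A + B) ^ 2 :=
              le_mul_of_one_le_right (mul_nonneg (sq_nonneg A) (sq_nonneg B)) (by linarith)
      have hkey : a ^ 4 ≤ A ^ 2 * B ^ 2 * (b * A + a * B) ^ 2 := by
        rw [hSne]
        calc a ^ 4 = a ^ 2 * a ^ 2 := by ring
          _ ≤ a ^ 2 * (A ^ 2 * B ^ 2 * ((1 + t) * A + B) ^ 2) :=
              mul_le_mul_of_nonneg_left hstep (sq_nonneg a)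
          _ = A ^ 2 * B ^ 2 * (a ^ 2 * ((1 + t) * A + B) ^ 2) := by ring
      have hmul : (b * A - a * B) ^ 2 * (b * A + a * B) ^ 2
          ≤ (D ^ 2 * A ^ 2 * B ^ 2) * (b * A + a * B) ^ 2 := by
        rw [hidsq]
        calc (a ^ 2 * D) ^ 2 = a ^ 4 * D ^ 2 := by ring
          _ ≤ (A ^ 2 * B ^ 2 * (b * A + a * B) ^ 2) * D ^ 2 :=
              mul_le_mul_of_nonneg_right hkey (sq_nonneg D)
          _ = (D ^ 2 * A ^ 2 * B ^ 2) * (b * A + a * B) ^ 2 := by ring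
      have h := le_of_mul_le_mul_right hmul hS2pos
      calc (a * B - b * A) ^ 2 = (b * A - a * B) ^ 2 := by ring
        _ ≤ D ^ 2 * A ^ 2 * B ^ 2 := h
  have key : (unitNormal b 0 - unitNormal a 0) ^ 2 + (unitNormal b 1 - unitNormal a 1) ^ 2
      ≤ (Real.sqrt 2 * D) ^ 2 := by
    have hsq2 : (Real.sqrt 2 * D) ^ 2 = 2 * D ^ 2 := by
      rw [mul_pow, Real.sq_sqrt (by norm_num : (0:ℝ) ≤ 2)]
    rw [hsq2]
    simp only [unitNormal, Matrix.cons_val_zero, Matrix.cons_val_one, Matrix.head_cons]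
    rw [← hA, ← hB]
    have e0 : -b / B - -a / A = (a * B - b * A) / (A * B) := by
      field_simp; ring
    have e1 : 1 / B - 1 / A = (A - B) / (A * B) := by
      rw [div_sub_div _ _ hBpos.ne' hApos.ne', one_mul, mul_one, mul_comm B A]
    rw [e0, e1, div_pow, div_pow, ← add_div,
      div_le_iff₀ (by positivity : (0:ℝ) < (A * B) ^ 2)]
    have hexp : 2 * D ^ 2 * (A * B) ^ 2 = D ^ 2 * A ^ 2 * B ^ 2 + D ^ 2 * A ^ 2 * B ^ 2 := by
      ring
    linarith [h0, h1]
  calc Real.sqrt ((unitNormal b 0 - unitNormal a 0) ^ 2 + (unitNormal b 1 - unitNormal a 1) ^ 2)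
      ≤ Real.sqrt ((Real.sqrt 2 * D) ^ 2) := Real.sqrt_le_sqrt key
    _ = Real.sqrt 2 * D := Real.sqrt_sq (by positivity)
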